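/- Let (H →∂ G, ▷) be a crossed module. Let g₁₃, g₁₄, g₁₅, g₃₄, g₃₅, g₄₅ ∈ G and h₁₂₃, h₁₃₄, h₁₃₅, h₁₄₅ ∈ H. Assume g₁₄ = ∂(h₁₃₄) g₃₄ g₁₃, g₁₅ = ∂(h₁₄₅) g₄₅ g₁₄, and g₁₅ = ∂(h₁₃₅) g₃₅ g₁₃ (flatness of faces 134, 145, 135). Then h₁₃₅⁻¹ h₁₄₅ (g₄₅ ▷ h₁₃₄) ((g₄₅ g₃₄) ▷ h₁₂₃) = (g₃₅ ▷ h₁₂₃) h₁₃₅⁻¹ h₁₄₅ (g₄₅ ▷ h₁₃₄). -/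
import Mathlib


/-- A crossed module `(H --∂--> G, ▷)`: groups `G`, `H`, a group homomorphism
`δ : H →* G`, and a left action of `G` on `H` in which every `g : G` acts as a
group automorphism of `H` (encoded as `act : G →* MulAut H`), satisfying the
equivariance axiom and the Peiffer identity. -/
structure CrossedModule (G H : Type*) [Group G] [Group H] where
  δ : H →* G
  act : G →* MulAut H
  equivariance : ∀ (g : G) (h : H), δ (act g h) = g * δ h * g⁻¹
  peiffer : ∀ (h h' : H), act (δ h) h' = h * h' * h⁻¹

/-- Under flatness of faces 134, 145 and 135, the element
`h₁₃₅⁻¹ h₁₄₅ (g₄₅ ▷ h₁₃₄)` commutes past the action of `g₄₅ g₃₄` versus `g₃₅` on `h₁₂₃`. -/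
theorem slide_action {G H : Type*} [Group G] [Group H] (X : CrossedModule G H)
    (g₁₃ g₁₄ g₁₅ g₃₄ g₃₅ g₄₅ : G) (h₁₂₃ h₁₃₄ h₁₃₅ h₁₄₅ : H)
    (h1 : g₁₄ = X.δ h₁₃₄ * g₃₄ * g₁₃)
    (h2 : g₁₅ = X.δ h₁₄₅ * g₄₅ * g₁₄)
    (h3 : g₁₅ = X.δ h₁₃₅ * g₃₅ * g₁₃) :
    h₁₃₅⁻¹ * h₁₄₅ * X.act g₄₅ h₁₃₄ * X.act (g₄₅ * g₃₄) h₁₂₃ =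
      X.act g₃₅ h₁₂₃ * (h₁₃₅⁻¹ * h₁₄₅ * X.act g₄₅ h₁₃₄) := by
  set k := h₁₃₅⁻¹ * h₁₄₅ * X.act g₄₅ h₁₃₄ with hk
  have e4 : X.δ h₁₃₄ = g₁₄ * g₁₃⁻¹ * g₃₄⁻¹ := by rw [h1]; group
  have e5 : X.δ h₁₄₅ = g₁₅ * g₁₄⁻¹ * g₄₅⁻¹ := by rw [h2]; group
  have e3 : X.δ h₁₃₅ = g₁₅ * g₁₃⁻¹ * g₃₅⁻¹ := by rw [h3]; group
  have hδ : X.δ k = g₃₅ * g₃₄⁻¹ * g₄₅⁻¹ := by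
    simp only [hk, map_mul, map_inv, X.equivariance, e3, e4, e5]
    group
  have hp := X.peiffer k (X.act (g₄₅ * g₃₄) h₁₂₃)
  rw [hδ, ← MulAut.mul_apply, ← map_mul] at hp
  have hg : g₃₅ * g₃₄⁻¹ * g₄₅⁻¹ * (g₄₅ * g₃₄) = g₃₅ := by group
  rw [hg] at hp
  rw [hp]
  group
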